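/- Let f : A → B be a homomorphism of commutative rings, J an ideal of B, and I an ideal of A. Then the set I⋈^f J := {(i, f(i)+j) : i ∈ I, j ∈ J} is an ideal of the ring A⋈^f J, and the quotient ring (A⋈^f J)/(I⋈^f J) is isomorphic to A/I. -/

import Mathlib

/-- The amalgamation `A ⋈^f J = {(a, f a + j) | a ∈ A, j ∈ J}` of `A` with `B`
along the ideal `J` of `B`, with respect to the ring homomorphism `f : A → B`,
as a subring of the product ring `A × B`. -/
def amalgamation {A B : Type*} [CommRing A] [CommRing B] (f : A →+* B) (J : Ideal B) :
    Subring (A × B) where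
  carrier := {x : A × B | ∃ a : A, ∃ j ∈ J, x = (a, f a + j)}
  one_mem' := ⟨1, 0, J.zero_mem, by simp [Prod.ext_iff]⟩
  zero_mem' := ⟨0, 0, J.zero_mem, by simp [Prod.ext_iff]⟩
  mul_mem' := by
    rintro x y ⟨a, j, hj, rfl⟩ ⟨c, k, hk, rfl⟩
    refine ⟨a * c, f a * k + j * f c + j * k,
      J.add_mem (J.add_mem (J.mul_mem_left _ hk) (J.mul_mem_right _ hj)) (J.mul_mem_right _ hj),
      ?_⟩
    simp only [Prod.mk_mul_mk, map_mul, Prod.mk.injEq]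
    exact ⟨trivial, by ring⟩
  add_mem' := by
    rintro x y ⟨a, j, hj, rfl⟩ ⟨c, k, hk, rfl⟩
    refine ⟨a + c, j + k, J.add_mem hj hk, ?_⟩
    simp only [Prod.mk_add_mk, map_add, Prod.mk.injEq]
    exact ⟨trivial, by ring⟩
  neg_mem' := by
    rintro x ⟨a, j, hj, rfl⟩
    refine ⟨-a, -j, J.neg_mem hj, ?_⟩
    simp only [Prod.neg_mk, map_neg, Prod.mk.injEq]
    exact ⟨trivial, by ring⟩

theorem statement1 {A B : Type*} [CommRing A] [CommRing B] (f : A →+* B) (J : Ideal B)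
    (I : Ideal A) :
    ∃ K : Ideal ↥(amalgamation f J),
      (∀ x : amalgamation f J,
        x ∈ K ↔ ∃ i ∈ I, ∃ j ∈ J, (x : A × B) = (i, f i + j)) ∧
      Nonempty ((↥(amalgamation f J) ⧸ K) ≃+* (A ⧸ I)) := by
  set φ : ↥(amalgamation f J) →+* A ⧸ I :=
    (Ideal.Quotient.mk I).comp (((RingHom.fst A B).comp (amalgamation f J).subtype))
  have hsurj : Function.Surjective φ := by
    intro q
    obtain ⟨a, rfl⟩ := Ideal.Quotient.mk_surjective q
    exact ⟨⟨(a, f a + 0), a, 0, J.zero_mem, rfl⟩, rfl⟩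
  refine ⟨RingHom.ker φ, fun x => ?_, ⟨RingHom.quotientKerEquivOfSurjective hsurj⟩⟩
  have hker : x ∈ RingHom.ker φ ↔ (x : A × B).1 ∈ I := by
    simp [φ, RingHom.mem_ker, Ideal.Quotient.eq_zero_iff_mem]
  rw [hker]
  constructor
  · intro h1
    obtain ⟨a, j, hj, hx⟩ := x.2
    refine ⟨a, ?_, j, hj, hx⟩
    rwa [hx] at h1
  · rintro ⟨i, hi, j, hj, hx⟩
    rw [hx]; exact hi
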